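/- The set {e ∈ ℝ^3 : e·ω_k ≥ 0 for all k ∈ {0,1,2,3} and e₃ = 1}, where ω₀=(1,0,1), ω₁=(0,1,1), ω₂=(−1,0,1), ω₃=(0,−1,1), equals the convex hull of the four points e₀=(1,1,1), e₁=(−1,1,1), e₂=(−1,−1,1), e₃=(1,−1,1). -/

import Mathlib

open Matrix Finset

noncomputable section

/-- Extremal squit states. -/
def sqState : Fin 4 → Fin 3 → ℝ :=
  ![![1, 0, 1], ![0, 1, 1], ![-1, 0, 1], ![0, -1, 1]]

/-- Extremal normalized squit effects. -/
def sqEffect : Fin 4 → Fin 3 → ℝ :=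
  ![![1, 1, 1], ![-1, 1, 1], ![-1, -1, 1], ![1, -1, 1]]

/-- the normalized dual effect polytope of the squit is the
convex hull of the four extremal normalized effects. -/
theorem squit_dual_effects_eq_convexHull :
    {e : Fin 3 → ℝ | (∀ k : Fin 4, 0 ≤ e ⬝ᵥ sqState k) ∧ e 2 = 1}
      = convexHull ℝ (Set.range sqEffect) := by
  apply Set.eq_of_subset_of_subset
  · rintro e ⟨hk, h2⟩
    set x := e 0 with hx
    set y := e 1 with hy
    have h0 : 0 ≤ x + 1 := by
      have := hk 0
      simpa [sqState, dotProduct, Fin.sum_univ_three, h2] using this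
    have h1 : 0 ≤ y + 1 := by
      have := hk 1
      simpa [sqState, dotProduct, Fin.sum_univ_three, h2] using this
    have h2' : 0 ≤ 1 - x := by
      have := hk 2
      have : 0 ≤ -x + 1 := by
        simpa [sqState, dotProduct, Fin.sum_univ_three, h2] using this
      linarith
    have h3 : 0 ≤ 1 - y := by
      have := hk 3
      have : 0 ≤ -y + 1 := by
        simpa [sqState, dotProduct, Fin.sum_univ_three, h2] using this
      linarith
    set w : Fin 4 → ℝ :=
      ![(1+x)*(1+y)/4, (1-x)*(1+y)/4, (1-x)*(1-y)/4, (1+x)*(1-y)/4] with hw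
    have hwnn : ∀ i ∈ Finset.univ, 0 ≤ w i := by
      intro i _
      fin_cases i <;> simp [hw] <;> nlinarith
    have hwsum : ∑ i, w i = 1 := by
      simp [hw, Fin.sum_univ_four]; ring
    have hmem : ∀ i ∈ Finset.univ, sqEffect i ∈ Set.range sqEffect := fun i _ => ⟨i, rfl⟩
    have := Finset.centerMass_mem_convexHull Finset.univ hwnn (by rw [hwsum]; norm_num) hmem
    have hc : Finset.univ.centerMass w sqEffect = e := by
      rw [Finset.centerMass, hwsum]
      funext j
      fin_cases j <;>
        simp [sqEffect, hw, Fin.sum_univ_four, ← hx, ← hy, h2] <;> ring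
    rwa [hc] at this
  · apply convexHull_min
    · rintro _ ⟨i, rfl⟩
      constructor
      · intro k
        fin_cases i <;> fin_cases k <;>
          norm_num [sqEffect, sqState, dotProduct, Fin.sum_univ_three, Matrix.cons_val_two, Matrix.tail_cons, Matrix.head_cons]
      · fin_cases i <;> norm_num [sqEffect, Matrix.cons_val_two, Matrix.tail_cons, Matrix.head_cons]
    · rintro a ⟨ha, ha2⟩ b ⟨hb, hb2⟩ s t hs ht hst
      constructor
      · intro k
        have : (s • a + t • b) ⬝ᵥ sqState k = s * (a ⬝ᵥ sqState k) + t * (b ⬝ᵥ sqState k) := by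
          simp [dotProduct, Fin.sum_univ_three]; ring
        rw [this]
        have := ha k; have := hb k
        positivity
      · simp [ha2, hb2, hst]
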